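/- (Amalgamation Lemma) Let G be a finite simple graph that is the union of two subgraphs G_1 and G_2 with G_0 = G_1 ∩ G_2 (the amalgam of G_1 and G_2 over G_0). Suppose Staller has a winning strategy in the Maker–Breaker total domination game on G_1 (as first player, respectively as second player) such that against every sequence of moves of the opponent she wins by claiming, in G_1, all vertices of the open neighborhood of some vertex belonging to V(G_1) \ V(G_2). Then Staller has a winning strategy in the Maker–Breaker total domination game on G (as first player, respectively as second player). -/
import Mathlib


namespace MBTD

variable {V : Type*} [Fintype V] [DecidableEq V]

/-- `a` is a total dominating set of `G`: every vertex has a neighbour in `a`. -/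
def IsTotalDomSet (G : SimpleGraph V) (a : Finset V) : Prop :=
  ∀ v : V, ∃ u ∈ a, G.Adj u v

/-- `WinsAux win n turn a b` describes the generic positional game in which two players
alternately claim previously unclaimed vertices until every vertex is claimed.
Here `a` is the set of vertices claimed so far by the tracked player, `b` the set claimed by
the opponent, `turn = true` iff the tracked player is the next to move, and `n` is the number
of moves still to be played.  The tracked player wins iff `win` holds of the final position. -/
def WinsAux (win : Finset V → Finset V → Prop) : ℕ → Bool → Finset V → Finset V → Prop
  | 0, _, a, b => win a b
  | n + 1, true, a, b => ∃ v ∈ Finset.univ \ (a ∪ b), WinsAux win n false (insert v a) b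
  | n + 1, false, a, b => ∀ v ∈ Finset.univ \ (a ∪ b), WinsAux win n true a (insert v b)

/-- Dominator has a winning strategy in the Maker-Breaker total domination game on `G`,
where `dFirst = true` means Dominator moves first (the D-game) and `dFirst = false` means
Staller moves first (the S-game).  Dominator wins iff the set of vertices he has claimed at
the end of the game is a total dominating set of `G`. -/
def DominatorWinsMBTD (G : SimpleGraph V) (dFirst : Bool) : Prop :=
  WinsAux (fun a _ => IsTotalDomSet G a) (Fintype.card V) dFirst ∅ ∅

/-- Staller has a winning strategy in the Maker-Breaker total domination game on `G`,
where `dFirst = true` means Dominator moves first (the D-game) and `dFirst = false` means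
Staller moves first (the S-game).  Staller wins iff she claims every vertex of the open
neighbourhood of some vertex. -/
def StallerWinsMBTD (G : SimpleGraph V) (dFirst : Bool) : Prop :=
  WinsAux (fun a _ => ∃ v : V, ∀ u : V, G.Adj u v → u ∈ a) (Fintype.card V) (!dFirst) ∅ ∅

/-- `G` is a `𝒟` graph: Dominator wins both the D-game and the S-game. -/
def IsD (G : SimpleGraph V) : Prop :=
  DominatorWinsMBTD G true ∧ DominatorWinsMBTD G false

/-- `G` is an `𝒮` graph: Staller wins both the D-game and the S-game. -/
def IsS (G : SimpleGraph V) : Prop :=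
  StallerWinsMBTD G true ∧ StallerWinsMBTD G false

/-- `G` is an `𝒩` graph: whichever player moves first wins. -/
def IsN (G : SimpleGraph V) : Prop :=
  DominatorWinsMBTD G true ∧ StallerWinsMBTD G false

lemma free_insert_left (v : V) (a b : Finset V) :
    Finset.univ \ (insert v a ∪ b) = (Finset.univ \ (a ∪ b)).erase v := by
  ext u
  simp only [Finset.mem_sdiff, Finset.mem_univ, true_and, Finset.mem_union, Finset.mem_insert,
    Finset.mem_erase]
  tauto

lemma free_insert_right (v : V) (a b : Finset V) :
    Finset.univ \ (a ∪ insert v b) = (Finset.univ \ (a ∪ b)).erase v := by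
  ext u
  simp only [Finset.mem_sdiff, Finset.mem_univ, true_and, Finset.mem_union, Finset.mem_insert,
    Finset.mem_erase]
  tauto

lemma card_free_insert_left (v : V) (a b : Finset V) (hv : v ∈ Finset.univ \ (a ∪ b)) :
    (Finset.univ \ (insert v a ∪ b)).card + 1 = (Finset.univ \ (a ∪ b)).card := by
  rw [free_insert_left, Finset.card_erase_of_mem hv]
  have := Finset.card_pos.mpr ⟨v, hv⟩
  omega

lemma card_free_insert_right (v : V) (a b : Finset V) (hv : v ∈ Finset.univ \ (a ∪ b)) :
    (Finset.univ \ (a ∪ insert v b)).card + 1 = (Finset.univ \ (a ∪ b)).card := by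
  rw [free_insert_right, Finset.card_erase_of_mem hv]
  have := Finset.card_pos.mpr ⟨v, hv⟩
  omega

set_option linter.unusedSectionVars false in
lemma final_win (G : SimpleGraph V) (G₁ G₂ : G.Subgraph) (hamalg : G₁ ⊔ G₂ = ⊤)
    (a : Finset V)
    (hd : ∃ v : ↥G₁.verts, (↑v : V) ∉ G₂.verts ∧
      ∀ u : ↥G₁.verts, G₁.Adj ↑u ↑v → (↑u : V) ∈ a) :
    ∃ v : V, ∀ u : V, G.Adj u v → u ∈ a := by
  obtain ⟨v, hv2, hv⟩ := hd
  refine ⟨↑v, fun u hu => ?_⟩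
  have h2 : G₁.Adj u ↑v ∨ G₂.Adj u ↑v := by
    rw [← SimpleGraph.Subgraph.sup_adj, hamalg, SimpleGraph.Subgraph.top_adj]
    exact hu
  rcases h2 with h1 | h2
  · exact hv ⟨u, G₁.edge_vert h1⟩ h1
  · exact absurd (G₂.edge_vert h2.symm) hv2

lemma key (G : SimpleGraph V) (G₁ G₂ : G.Subgraph) (hamalg : G₁ ⊔ G₂ = ⊤)
    [Fintype ↥G₁.verts] :
    ∀ (n : ℕ) (turn : Bool) (a b : Finset V),
      (Finset.univ \ (a ∪ b)).card = n →
      ((∃ v : ↥G₁.verts, (↑v : V) ∉ G₂.verts ∧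
          ∀ u : ↥G₁.verts, G₁.Adj ↑u ↑v → (↑u : V) ∈ a) ∨
        ∃ a₁ b₁ : Finset ↥G₁.verts,
          WinsAux (fun a' _ => ∃ v : ↥G₁.verts, (↑v : V) ∉ G₂.verts ∧
              ∀ u : ↥G₁.verts, G₁.Adj ↑u ↑v → u ∈ a')
            ((Finset.univ \ (a₁ ∪ b₁)).card) turn a₁ b₁ ∧
          (∀ u ∈ a₁, (↑u : V) ∈ a) ∧
          (∀ u : ↥G₁.verts, u ∈ Finset.univ \ (a₁ ∪ b₁) →
            (↑u : V) ∈ Finset.univ \ (a ∪ b))) →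
      WinsAux (fun a' _ => ∃ v : V, ∀ u : V, G.Adj u v → u ∈ a') n turn a b := by
  intro n
  induction n with
  | zero =>
    intro turn a b hn hinv
    have hdone : ∃ v : ↥G₁.verts, (↑v : V) ∉ G₂.verts ∧
        ∀ u : ↥G₁.verts, G₁.Adj ↑u ↑v → (↑u : V) ∈ a := by
      rcases hinv with h | ⟨a₁, b₁, hw, hsub, hfr⟩
      · exact h
      · have h0 : Finset.univ \ (a₁ ∪ b₁) = ∅ := by
          rw [Finset.eq_empty_iff_forall_notMem]
          intro u hu
          have := hfr u hu
          rw [Finset.card_eq_zero.mp hn] at this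
          exact absurd this (Finset.notMem_empty _)
        rw [h0] at hw
        simp only [Finset.card_empty] at hw
        obtain ⟨v, hv2, hv⟩ := hw
        exact ⟨v, hv2, fun u hu => hsub u (hv u hu)⟩
    exact final_win G G₁ G₂ hamalg a hdone
  | succ n ih =>
    intro turn a b hn hinv
    -- normalize: either done, or live with positive number of free simulated vertices
    have hinv2 : (∃ v : ↥G₁.verts, (↑v : V) ∉ G₂.verts ∧
          ∀ u : ↥G₁.verts, G₁.Adj ↑u ↑v → (↑u : V) ∈ a) ∨
        ∃ a₁ b₁ : Finset ↥G₁.verts, ∃ m : ℕ,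
          (Finset.univ \ (a₁ ∪ b₁)).card = m + 1 ∧
          WinsAux (fun a' _ => ∃ v : ↥G₁.verts, (↑v : V) ∉ G₂.verts ∧
              ∀ u : ↥G₁.verts, G₁.Adj ↑u ↑v → u ∈ a') (m + 1) turn a₁ b₁ ∧
          (∀ u ∈ a₁, (↑u : V) ∈ a) ∧
          (∀ u : ↥G₁.verts, u ∈ Finset.univ \ (a₁ ∪ b₁) →
            (↑u : V) ∈ Finset.univ \ (a ∪ b)) := by
      rcases hinv with h | ⟨a₁, b₁, hw, hsub, hfr⟩
      · exact Or.inl h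
      · cases hk : (Finset.univ \ (a₁ ∪ b₁)).card with
        | zero =>
          rw [hk] at hw
          obtain ⟨v, hv2, hv⟩ := hw
          exact Or.inl ⟨v, hv2, fun u hu => hsub u (hv u hu)⟩
        | succ m =>
          rw [hk] at hw
          exact Or.inr ⟨a₁, b₁, m, hk, hw, hsub, hfr⟩
    have hne : ∃ x, x ∈ Finset.univ \ (a ∪ b) := by
      have : 0 < (Finset.univ \ (a ∪ b)).card := by omega
      exact Finset.card_pos.mp this
    cases turn with
    | true =>
      show ∃ v ∈ Finset.univ \ (a ∪ b), WinsAux _ n false (insert v a) b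
      rcases hinv2 with hd | ⟨a₁, b₁, m, hk, hw, hsub, hfr⟩
      · obtain ⟨x, hx⟩ := hne
        refine ⟨x, hx, ih false (insert x a) b ?_ (Or.inl ?_)⟩
        · have := card_free_insert_left x a b hx
          omega
        · obtain ⟨v, hv2, hv⟩ := hd
          exact ⟨v, hv2, fun u hu => Finset.mem_insert_of_mem (hv u hu)⟩
      · obtain ⟨v₁, hv₁, hw'⟩ := hw
        have hv₁V : (↑v₁ : V) ∈ Finset.univ \ (a ∪ b) := hfr v₁ hv₁
        refine ⟨↑v₁, hv₁V, ih false (insert (↑v₁) a) b ?_ (Or.inr ⟨insert v₁ a₁, b₁, ?_, ?_, ?_⟩)⟩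
        · have := card_free_insert_left (↑v₁ : V) a b hv₁V
          omega
        · have hc : (Finset.univ \ (insert v₁ a₁ ∪ b₁)).card = m := by
            have := card_free_insert_left v₁ a₁ b₁ hv₁
            omega
          rw [hc]
          exact hw'
        · intro u hu
          rcases Finset.mem_insert.mp hu with h | h
          · subst h; exact Finset.mem_insert_self _ _
          · exact Finset.mem_insert_of_mem (hsub u h)
        · intro u hu
          rw [free_insert_left] at hu
          obtain ⟨hune, hufree⟩ := Finset.mem_erase.mp hu
          have := hfr u hufree
          rw [free_insert_left, Finset.mem_erase]
          exact ⟨fun hc => hune (Subtype.ext hc), this⟩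
    | false =>
      show ∀ v ∈ Finset.univ \ (a ∪ b), WinsAux _ n true a (insert v b)
      intro x hx
      have hcard : (Finset.univ \ (a ∪ insert x b)).card = n := by
        have := card_free_insert_right x a b hx
        omega
      rcases hinv2 with hd | ⟨a₁, b₁, m, hk, hw, hsub, hfr⟩
      · exact ih true a (insert x b) hcard (Or.inl hd)
      · by_cases hx1 : ∃ hxm : x ∈ G₁.verts,
            (⟨x, hxm⟩ : ↥G₁.verts) ∈ Finset.univ \ (a₁ ∪ b₁)
        · obtain ⟨hxm, hxf⟩ := hx1
          have hw' := hw ⟨x, hxm⟩ hxf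
          refine ih true a (insert x b) hcard
            (Or.inr ⟨a₁, insert ⟨x, hxm⟩ b₁, ?_, hsub, ?_⟩)
          · have hc : (Finset.univ \ (a₁ ∪ insert ⟨x, hxm⟩ b₁)).card = m := by
              have := card_free_insert_right (⟨x, hxm⟩ : ↥G₁.verts) a₁ b₁ hxf
              omega
            rw [hc]
            exact hw'
          · intro u hu
            rw [free_insert_right] at hu
            obtain ⟨hune, hufree⟩ := Finset.mem_erase.mp hu
            have := hfr u hufree
            rw [free_insert_right, Finset.mem_erase]
            exact ⟨fun hc => hune (Subtype.ext hc), this⟩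
        · -- phantom move: Dominator played outside the simulated free set
          have : 0 < (Finset.univ \ (a₁ ∪ b₁)).card := by omega
          obtain ⟨w, hwf⟩ := Finset.card_pos.mp this
          have hw' := hw w hwf
          refine ih true a (insert x b) hcard
            (Or.inr ⟨a₁, insert w b₁, ?_, hsub, ?_⟩)
          · have hc : (Finset.univ \ (a₁ ∪ insert w b₁)).card = m := by
              have := card_free_insert_right w a₁ b₁ hwf
              omega
            rw [hc]
            exact hw'
          · intro u hu
            rw [free_insert_right] at hu
            obtain ⟨hune, hufree⟩ := Finset.mem_erase.mp hu
            have huV := hfr u hufree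
            rw [free_insert_right, Finset.mem_erase]
            refine ⟨fun hc : (↑u : V) = x => ?_, huV⟩
            exact hx1 ⟨hc ▸ u.2, by
              have he : (⟨x, hc ▸ u.2⟩ : ↥G₁.verts) = u := Subtype.ext hc.symm
              rw [he]; exact hufree⟩


/-- Amalgamation Lemma: let `G` be the amalgam of its subgraphs `G₁` and `G₂`
(that is, `G₁ ⊔ G₂ = ⊤`).  Suppose Staller, playing the MBTD game on `G₁` (moving first iff
`stallerFirst`), has a strategy guaranteeing that at the end of the game she has claimed the
whole open neighbourhood (in `G₁`) of some vertex of `V(G₁) \ V(G₂)`.  Then Staller has a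
winning strategy in the MBTD game on `G` (moving first iff `stallerFirst`). -/
theorem stmt12 {V : Type*} [Fintype V] [DecidableEq V] (G : SimpleGraph V)
    (G₁ G₂ : G.Subgraph) (hamalg : G₁ ⊔ G₂ = ⊤)
    [Fintype ↥G₁.verts] (stallerFirst : Bool)
    (h : WinsAux (V := ↥G₁.verts)
      (fun a _ => ∃ v : ↥G₁.verts, (↑v : V) ∉ G₂.verts ∧
        ∀ u : ↥G₁.verts, G₁.Adj ↑u ↑v → u ∈ a)
      (Fintype.card ↥G₁.verts) stallerFirst ∅ ∅) :
    StallerWinsMBTD G (!stallerFirst) := by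
  unfold StallerWinsMBTD
  simp only [Bool.not_not]
  have hc1 : (Finset.univ \ ((∅ : Finset ↥G₁.verts) ∪ ∅)).card = Fintype.card ↥G₁.verts := by
    simp
  apply key G G₁ G₂ hamalg (Fintype.card V) stallerFirst ∅ ∅ (by simp)
  exact Or.inr ⟨∅, ∅, by rw [hc1]; exact h, by simp, by simp⟩


end MBTD
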